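/- arXiv:1508.04732 — 5 statements merged into one kernel-verified Lean document; each statement's English description precedes it below -/
import Mathlib

section
/- For each even n ≥ 0, the element θₙ⁽⁰⁾ = Σ_{i=0}^{n} (-1)ⁱ xᵢ x_{n-i} of the infinite polynomial ring Ω lies in the kernel of the down operator Δ, and θₙ⁽⁰⁾ ≠ 0. -/
open MvPolynomial

/-- The down operator `Δ` on `Ω = k[x₀, x₁, x₂, ...]`. -/
noncomputable def downOp (k : Type*) [Field k] [CharZero k] :
    Derivation k (MvPolynomial ℕ k) (MvPolynomial ℕ k) :=
  MvPolynomial.mkDerivation k (fun n => if n = 0 then 0 else X (n - 1))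

/-- `θₙ⁽⁰⁾ = Σ_{i=0}^{n} (-1)ⁱ xᵢ x_{n-i}`. -/
noncomputable def theta0 (k : Type*) [Field k] [CharZero k] (n : ℕ) : MvPolynomial ℕ k :=
  ∑ i ∈ Finset.range (n + 1), (-1 : MvPolynomial ℕ k) ^ i * X i * X (n - i)

/-- For each even `n ≥ 0`, `θₙ⁽⁰⁾` lies in `ker Δ` and is nonzero. -/
theorem theta0_mem_ker_downOp (k : Type*) [Field k] [CharZero k] :
    ∀ n : ℕ, Even n → downOp k (theta0 k n) = 0 ∧ theta0 k n ≠ 0 := by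
  intro n hn
  obtain ⟨m, hm⟩ := hn
  have hd : ∀ i : ℕ, downOp k (X i : MvPolynomial ℕ k) =
      if i = 0 then 0 else X (i - 1) := fun i => mkDerivation_X _ _ _
  constructor
  · have hre : theta0 k n = ∑ i ∈ Finset.range (n + 1),
        ((-1 : k) ^ i) • (X i * X (n - i) : MvPolynomial ℕ k) := by
      unfold theta0
      refine Finset.sum_congr rfl fun i _ => ?_
      rw [smul_eq_C_mul, map_pow, map_neg, map_one, mul_assoc]
    rw [hre, map_sum]
    have hterm : ∀ i ∈ Finset.range (n + 1),
        downOp k (((-1 : k) ^ i) • (X i * X (n - i) : MvPolynomial ℕ k)) =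
          ((-1 : k) ^ i) • (X i * downOp k (X (n - i))) +
          ((-1 : k) ^ i) • (X (n - i) * downOp k (X i)) := by
      intro i _
      rw [Derivation.map_smul, Derivation.leibniz, smul_add, smul_eq_mul, smul_eq_mul]
    rw [Finset.sum_congr rfl hterm, Finset.sum_add_distrib]
    have h1 : ∑ i ∈ Finset.range (n + 1),
        ((-1 : k) ^ i) • (X i * downOp k (X (n - i))) =
        ∑ i ∈ Finset.range n,
          ((-1 : k) ^ i) • (X i * X (n - i - 1) : MvPolynomial ℕ k) := by
      rw [Finset.sum_range_succ, Nat.sub_self, hd 0, if_pos rfl, mul_zero, smul_zero,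
        add_zero]
      refine Finset.sum_congr rfl fun i hi => ?_
      rw [hd, if_neg (by simp at hi; omega)]
    have h2 : ∑ i ∈ Finset.range (n + 1),
        ((-1 : k) ^ i) • (X (n - i) * downOp k (X i)) =
        ∑ i ∈ Finset.range n,
          ((-1 : k) ^ (i + 1)) • (X (n - (i + 1)) * X i : MvPolynomial ℕ k) := by
      rw [Finset.sum_range_succ', hd 0, if_pos rfl, mul_zero, smul_zero, add_zero]
      refine Finset.sum_congr rfl fun i hi => ?_
      rw [hd, if_neg (by omega)]
      norm_num
    rw [h1, h2, ← Finset.sum_add_distrib]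
    refine Finset.sum_eq_zero fun i hi => ?_
    have : n - (i + 1) = n - i - 1 := by omega
    rw [this, pow_succ, mul_neg_one, neg_smul, mul_comm (X (n - i - 1) : MvPolynomial ℕ k),
      add_neg_cancel]
  · intro h0
    have heval : eval (fun j => if j = m then (1 : k) else 0) (theta0 k n) = (-1 : k) ^ m := by
      unfold theta0
      rw [map_sum, Finset.sum_eq_single m]
      · have : n - m = m := by omega
        simp [this]
      · intro i hi hne
        simp [hne]
      · intro hnot
        exact absurd (Finset.mem_range.mpr (by omega)) hnot
    rw [h0, map_zero] at heval
    exact pow_ne_zero m (by norm_num : (-1 : k) ≠ 0) heval.symm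
end

section
/- For an odd nonnegative integer n, every homogeneous quadratic form of degree (2,n) in the kernel of the down operator Δ is zero; for even n, the space of such forms is one-dimensional, spanned by θₙ⁽⁰⁾ = Σ_{i=0}^{n} (-1)ⁱ xᵢ x_{n-i}. -/
open MvPolynomial

/-- `Ω_{(2,n)}`, the span of the monomials `xᵢ x_{n-i}` for `0 ≤ i ≤ n`. -/
noncomputable def quadSpace (k : Type*) [Field k] [CharZero k] (n : ℕ) :
    Submodule k (MvPolynomial ℕ k) :=
  Submodule.span k {p | ∃ i ≤ n, p = X i * X (n - i)}

section Aux

set_option linter.unusedSectionVars false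

variable {k : Type*} [Field k] [CharZero k]

set_option maxHeartbeats 1000000 in
private lemma pair_eq (a b i j : ℕ) :
    (Finsupp.single i 1 + Finsupp.single j 1 : ℕ →₀ ℕ) =
      Finsupp.single a 1 + Finsupp.single b 1 ↔ (i = a ∧ j = b) ∨ (i = b ∧ j = a) := by
  constructor
  · intro h
    have ha := DFunLike.congr_fun h a
    have hb := DFunLike.congr_fun h b
    have hi := DFunLike.congr_fun h i
    have hj := DFunLike.congr_fun h j
    simp only [Finsupp.add_apply, Finsupp.single_apply] at ha hb hi hj
    split_ifs at ha hb hi hj <;> omega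
  · rintro (⟨rfl, rfl⟩ | ⟨rfl, rfl⟩)
    · rfl
    · rw [add_comm]

private lemma coeff_XX (a b i j : ℕ) :
    coeff (Finsupp.single a 1 + Finsupp.single b 1) (X i * X j : MvPolynomial ℕ k) =
      if (i = a ∧ j = b) ∨ (i = b ∧ j = a) then 1 else 0 := by
  rw [X, X, monomial_mul, coeff_monomial, mul_one]
  exact if_congr (pair_eq a b i j) rfl rfl

private lemma sum_ite_or (c : ℕ → k) {u v N : ℕ} (hu : u < N) (hv : v < N) :
    (∑ i ∈ Finset.range N, if i = u ∨ i = v then c i else 0) =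
      if u = v then c u else c u + c v := by
  split_ifs with h
  · subst h
    simp only [or_self]
    rw [Finset.sum_ite_eq' (Finset.range N) u c]
    simp [hu]
  · have he : ∀ i, (if i = u ∨ i = v then c i else 0) =
        (if i = u then c i else 0) + (if i = v then c i else 0) := by
      intro i
      by_cases h1 : i = u <;> by_cases h2 : i = v <;> simp_all
    rw [Finset.sum_congr rfl fun i _ => he i, Finset.sum_add_distrib,
      Finset.sum_ite_eq' (Finset.range N) u c, Finset.sum_ite_eq' (Finset.range N) v c]
    simp [hu, hv]

private lemma downOp_X (m : ℕ) : downOp k (X m) = if m = 0 then 0 else X (m - 1) := by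
  rw [downOp, mkDerivation_X]

private lemma downOp_XX (n i : ℕ) (hi : i ≤ n) :
    downOp k (X i * X (n - i) : MvPolynomial ℕ k) =
      (if i = 0 then 0 else X (i - 1) * X (n - i)) +
        (if i = n then 0 else X i * X (n - 1 - i)) := by
  rw [Derivation.leibniz, downOp_X, downOp_X, smul_eq_mul, smul_eq_mul]
  have h2 : (n - i = 0) = (i = n) := by apply propext; omega
  have h3 : n - i - 1 = n - 1 - i := by omega
  simp only [h2, h3]
  rw [add_comm]
  congr 1
  · split_ifs <;> simp [mul_comm]
  · split_ifs <;> simp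

private lemma mem_quadSpace_iff (n : ℕ) (p : MvPolynomial ℕ k) :
    p ∈ quadSpace k n ↔
      ∃ c : ℕ → k, p = ∑ i ∈ Finset.range (n + 1), c i • (X i * X (n - i)) := by
  have hset : {p : MvPolynomial ℕ k | ∃ i ≤ n, p = X i * X (n - i)} =
      Set.range (fun i : Fin (n + 1) => (X i.1 * X (n - i.1) : MvPolynomial ℕ k)) := by
    ext q
    constructor
    · rintro ⟨i, hi, rfl⟩; exact ⟨⟨i, Nat.lt_succ_of_le hi⟩, rfl⟩
    · rintro ⟨i, rfl⟩; exact ⟨i.1, Nat.lt_succ_iff.mp i.2, rfl⟩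
  rw [quadSpace, hset, Submodule.mem_span_range_iff_exists_fun]
  constructor
  · rintro ⟨c, hc⟩
    refine ⟨fun i => if h : i < n + 1 then c ⟨i, h⟩ else 0, ?_⟩
    rw [← hc, ← Fin.sum_univ_eq_sum_range
      (fun i => (if h : i < n + 1 then c ⟨i, h⟩ else 0) • (X i * X (n - i) : MvPolynomial ℕ k))
      (n + 1)]
    exact Finset.sum_congr rfl fun i _ => by simp [i.2]
  · rintro ⟨c, hc⟩
    refine ⟨fun i => c i.1, ?_⟩
    rw [hc, ← Fin.sum_univ_eq_sum_range]

private lemma theta0_eq (n : ℕ) :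
    theta0 k n = ∑ i ∈ Finset.range (n + 1), ((-1 : k) ^ i) • (X i * X (n - i)) := by
  refine Finset.sum_congr rfl fun i _ => ?_
  rw [smul_eq_C_mul, map_pow, map_neg, map_one, mul_assoc]

private lemma downOp_theta0 (n : ℕ) : downOp k (theta0 k n) = 0 := by
  rw [theta0_eq, map_sum]
  have h1 : ∀ i ∈ Finset.range (n + 1), (downOp k) ((-1 : k) ^ i • (X i * X (n - i))) =
      (-1 : k) ^ i • (if i = 0 then 0 else X (i - 1) * X (n - i)) +
        (-1 : k) ^ i • (if i = n then 0 else X i * X (n - 1 - i)) := by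
    intro i hi
    rw [Derivation.map_smul, downOp_XX n i (Nat.lt_succ_iff.mp (Finset.mem_range.mp hi)),
      smul_add]
  rw [Finset.sum_congr rfl h1, Finset.sum_add_distrib, Finset.sum_range_succ',
    Finset.sum_range_succ]
  simp only [Nat.succ_ne_zero, if_false, if_true, ite_self, smul_zero, add_zero, pow_zero,
    Nat.add_sub_cancel, if_pos rfl]
  have h2 : ∀ i ∈ Finset.range n, ((-1 : k) ^ (i + 1) •
      (X i * X (n - (i + 1)) : MvPolynomial ℕ k)) =
      -((-1 : k) ^ i • (X i * X (n - 1 - i))) := by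
    intro i hi
    have e : n - (i + 1) = n - 1 - i := by omega
    rw [e, pow_succ, mul_neg_one, neg_smul]
  have h3 : ∀ i ∈ Finset.range n, ((-1 : k) ^ i •
      (if i = n then 0 else X i * X (n - 1 - i) : MvPolynomial ℕ k)) =
      (-1 : k) ^ i • (X i * X (n - 1 - i)) := by
    intro i hi
    rw [if_neg (Nat.ne_of_lt (Finset.mem_range.mp hi))]
  rw [Finset.sum_congr rfl h2, Finset.sum_congr rfl h3, ← Finset.sum_add_distrib]
  exact Finset.sum_eq_zero fun i _ => neg_add_cancel _

private lemma key_eq (n : ℕ) (c : ℕ → k)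
    (h0 : downOp k (∑ i ∈ Finset.range (n + 1), c i • (X i * X (n - i))) = 0)
    (a : ℕ) (ha : a + 1 ≤ n) :
    (c a + c (n - a)) + (c (a + 1) + c (n - (a + 1))) = 0 := by
  have hD : downOp k (∑ i ∈ Finset.range (n + 1), c i • (X i * X (n - i))) =
      ∑ i ∈ Finset.range (n + 1), c i •
        ((if i = 0 then 0 else X (i - 1) * X (n - i)) +
          (if i = n then 0 else X i * X (n - 1 - i))) := by
    rw [map_sum]
    exact Finset.sum_congr rfl fun i hi => by
      rw [Derivation.map_smul, downOp_XX n i (Nat.lt_succ_iff.mp (Finset.mem_range.mp hi))]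
  have hterm : ∀ i ∈ Finset.range (n + 1),
      coeff (Finsupp.single a 1 + Finsupp.single (n - 1 - a) 1)
        (c i • ((if i = 0 then 0 else X (i - 1) * X (n - i)) +
          (if i = n then 0 else X i * X (n - 1 - i)))) =
        (if i = a + 1 ∨ i = n - a then c i else 0) +
          (if i = a ∨ i = n - 1 - a then c i else 0) := by
    intro i hi
    have hi' : i ≤ n := Nat.lt_succ_iff.mp (Finset.mem_range.mp hi)
    rw [coeff_smul, coeff_add,
      apply_ite (coeff (Finsupp.single a 1 + Finsupp.single (n - 1 - a) 1)),
      apply_ite (coeff (Finsupp.single a 1 + Finsupp.single (n - 1 - a) 1)),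
      coeff_zero, coeff_XX, coeff_XX, smul_eq_mul]
    split_ifs <;> (first | ring1 | (exfalso; omega))
  have hz : (if a + 1 = n - a then c (a + 1) else c (a + 1) + c (n - a)) +
        (if a = n - 1 - a then c a else c a + c (n - 1 - a)) = 0 := by
    have h1 : coeff (Finsupp.single a 1 + Finsupp.single (n - 1 - a) 1)
        (downOp k (∑ i ∈ Finset.range (n + 1), c i • (X i * X (n - i)))) = 0 := by
      rw [h0]; exact coeff_zero _
    rw [hD, coeff_sum, Finset.sum_congr rfl hterm, Finset.sum_add_distrib,
      sum_ite_or c (by omega) (by omega), sum_ite_or c (by omega) (by omega)] at h1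
    exact h1
  have e1 : n - (a + 1) = n - 1 - a := by omega
  rw [e1]
  by_cases h : a + 1 = n - a
  · have h2 : a = n - 1 - a := by omega
    have e2 : n - a = a + 1 := by omega
    rw [if_pos h, if_pos h2] at hz
    rw [e2, ← h2]
    linear_combination (2 : k) * hz
  · have h2 : ¬ a = n - 1 - a := by omega
    rw [if_neg h, if_neg h2] at hz
    linear_combination hz

private lemma two_smul_rep (n : ℕ) (c : ℕ → k) (p : MvPolynomial ℕ k)
    (hp : p = ∑ i ∈ Finset.range (n + 1), c i • (X i * X (n - i))) :
    (2 : k) • p = ∑ i ∈ Finset.range (n + 1), (c i + c (n - i)) • (X i * X (n - i)) := by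
  have hrefl : (∑ i ∈ Finset.range (n + 1), c (n - i) • (X i * X (n - i)) :
      MvPolynomial ℕ k) = p := by
    rw [hp, ← Finset.sum_range_reflect
      (fun i => c i • (X i * X (n - i) : MvPolynomial ℕ k)) (n + 1)]
    apply Finset.sum_congr rfl
    intro i hi
    have hi' : i ≤ n := Nat.lt_succ_iff.mp (Finset.mem_range.mp hi)
    have h1 : n + 1 - 1 - i = n - i := by omega
    have h2 : n - (n - i) = i := by omega
    rw [h1, h2, mul_comm]
  calc (2 : k) • p = p + p := by rw [two_smul]
  _ = (∑ i ∈ Finset.range (n + 1), c i • (X i * X (n - i))) +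
      ∑ i ∈ Finset.range (n + 1), c (n - i) • (X i * X (n - i)) := by rw [← hp, hrefl]
  _ = _ := by
      rw [← Finset.sum_add_distrib]
      exact Finset.sum_congr rfl fun i _ => (add_smul _ _ _).symm

private lemma theta0_ne_zero {n : ℕ} (hn : Even n) : (theta0 k n : MvPolynomial ℕ k) ≠ 0 := by
  intro h
  have hc : coeff (Finsupp.single 0 1 + Finsupp.single n 1) (theta0 k n) = 0 := by
    rw [h, coeff_zero]
  rw [theta0_eq, coeff_sum] at hc
  have hterm : ∀ i ∈ Finset.range (n + 1),
      coeff (Finsupp.single 0 1 + Finsupp.single n 1)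
        (((-1 : k) ^ i) • (X i * X (n - i) : MvPolynomial ℕ k)) =
      (if i = 0 ∨ i = n then (-1 : k) ^ i else 0) := by
    intro i hi
    have hi' : i ≤ n := Nat.lt_succ_iff.mp (Finset.mem_range.mp hi)
    rw [coeff_smul, coeff_XX, smul_eq_mul]
    split_ifs <;> (first | ring1 | (exfalso; omega))
  rw [Finset.sum_congr rfl hterm, sum_ite_or _ (by omega) (by omega)] at hc
  rw [hn.neg_one_pow] at hc
  split_ifs at hc <;> norm_num at hc

end Aux

/-- For odd `n`, every quadratic form of degree `(2,n)` in `ker Δ` is zero; for even `n`,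
the space of such forms is one-dimensional, spanned by `θₙ⁽⁰⁾`. -/
theorem ker_downOp_quadSpace (k : Type*) [Field k] [CharZero k] (n : ℕ) :
    (Odd n → ∀ p ∈ quadSpace k n, downOp k p = 0 → p = 0) ∧
    (Even n →
      theta0 k n ∈ quadSpace k n ∧ downOp k (theta0 k n) = 0 ∧ theta0 k n ≠ 0 ∧
      ∀ p ∈ quadSpace k n, downOp k p = 0 → ∃ c : k, p = c • theta0 k n) := by
  constructor
  · intro hodd p hp hΔ
    obtain ⟨c, hc⟩ := (mem_quadSpace_iff n p).mp hp
    have h0 : downOp k (∑ i ∈ Finset.range (n + 1), c i • (X i * X (n - i))) = 0 := by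
      rw [← hc]; exact hΔ
    have hstep : ∀ a, a + 1 ≤ n →
        (c a + c (n - a)) + (c (a + 1) + c (n - (a + 1))) = 0 :=
      fun a ha => key_eq n c h0 a ha
    have hpow : ∀ a, a ≤ n →
        c a + c (n - a) = (-1 : k) ^ a * (c 0 + c (n - 0)) := by
      intro a
      induction a with
      | zero => intro _; simp
      | succ a ih =>
        intro ha
        have h1 := hstep a ha
        have h2 := ih (by omega)
        rw [pow_succ]
        linear_combination h1 - h2
    have hb0 : c 0 + c (n - 0) = 0 := by
      have h1 := hpow n le_rfl
      rw [hodd.neg_one_pow, Nat.sub_self, Nat.sub_zero] at h1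
      have h2 : (2 : k) * (c 0 + c n) = 0 := by linear_combination h1
      rcases mul_eq_zero.mp h2 with h | h
      · exact absurd h two_ne_zero
      · rw [Nat.sub_zero]; exact h
    have h2p : (2 : k) • p = 0 := by
      rw [two_smul_rep n c p hc]
      refine Finset.sum_eq_zero fun i hi => ?_
      rw [hpow i (Nat.lt_succ_iff.mp (Finset.mem_range.mp hi)), hb0, mul_zero, zero_smul]
    rcases smul_eq_zero.mp h2p with h | h
    · exact absurd h two_ne_zero
    · exact h
  · intro heven
    refine ⟨(mem_quadSpace_iff n _).mpr ⟨fun i => (-1 : k) ^ i, theta0_eq n⟩,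
      downOp_theta0 n, theta0_ne_zero heven, ?_⟩
    intro p hp hΔ
    obtain ⟨c, hc⟩ := (mem_quadSpace_iff n p).mp hp
    have h0 : downOp k (∑ i ∈ Finset.range (n + 1), c i • (X i * X (n - i))) = 0 := by
      rw [← hc]; exact hΔ
    have hstep : ∀ a, a + 1 ≤ n →
        (c a + c (n - a)) + (c (a + 1) + c (n - (a + 1))) = 0 :=
      fun a ha => key_eq n c h0 a ha
    have hpow : ∀ a, a ≤ n →
        c a + c (n - a) = (-1 : k) ^ a * (c 0 + c (n - 0)) := by
      intro a
      induction a with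
      | zero => intro _; simp
      | succ a ih =>
        intro ha
        have h1 := hstep a ha
        have h2 := ih (by omega)
        rw [pow_succ]
        linear_combination h1 - h2
    refine ⟨(c 0 + c (n - 0)) / 2, ?_⟩
    have key : (2 : k) • p = (c 0 + c (n - 0)) • theta0 k n := by
      rw [two_smul_rep n c p hc, theta0_eq, Finset.smul_sum]
      refine Finset.sum_congr rfl fun i hi => ?_
      rw [hpow i (Nat.lt_succ_iff.mp (Finset.mem_range.mp hi)), smul_smul, mul_comm]
    have h2 : (2 : k) • (((c 0 + c (n - 0)) / 2) • theta0 k n) = (2 : k) • p := by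
      rw [smul_smul, show (2 : k) * ((c 0 + c (n - 0)) / 2) = c 0 + c (n - 0) by
        field_simp]
      exact key.symm
    exact (smul_right_injective (MvPolynomial ℕ k) (two_ne_zero : (2 : k) ≠ 0) h2).symm
end

section
/- The subring S = k[x, xv, xv², ...] of the polynomial ring k[x,v] is not finitely generated as a k-algebra. -/
open MvPolynomial

/-- The subring `S = k[x, xv, xv², ...]` of `k[x,v]` is not a finitely generated
`k`-algebra. -/
theorem S_not_finitely_generated (k : Type*) [Field k] [CharZero k] :
    ¬ (Algebra.adjoin k
        {p : MvPolynomial (Fin 2) k | ∃ i : ℕ, p = X 0 * X 1 ^ i}).FG := by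
  classical
  rintro ⟨T, hT⟩
  -- W : elements all of whose monomials with x-exponent 0 are constant
  set W : Subalgebra k (MvPolynomial (Fin 2) k) :=
    { carrier := {p | ∀ m ∈ p.support, m 0 = 0 → m 1 = 0}
      mul_mem' := by
        intro p q hp hq m hm h0
        obtain ⟨a, ha, b, hb, rfl⟩ := Finset.mem_add.mp (support_mul p q hm)
        have h0' : a 0 + b 0 = 0 := h0
        have ha1 := hp a ha (Nat.eq_zero_of_add_eq_zero_right h0')
        have hb1 := hq b hb (Nat.eq_zero_of_add_eq_zero_left h0')
        show a 1 + b 1 = 0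
        omega
      one_mem' := by
        intro m hm
        rw [mem_support_iff, coeff_one] at hm
        rcases eq_or_ne m 0 with rfl | h
        · simp
        · rw [if_neg (fun e => h e.symm)] at hm; exact (hm rfl).elim
      add_mem' := by
        intro p q hp hq m hm
        rcases Finset.mem_union.mp (Finsupp.support_add hm) with h | h
        · exact hp m h
        · exact hq m h
      zero_mem' := by intro m hm; simp at hm
      algebraMap_mem' := by
        intro r m hm
        rw [mem_support_iff, algebraMap_eq, coeff_C] at hm
        rcases eq_or_ne m 0 with rfl | h
        · simp
        · simp [h.symm] at hm } with hWdef
  have hGW : Algebra.adjoin k {p : MvPolynomial (Fin 2) k | ∃ i : ℕ, p = X 0 * X 1 ^ i} ≤ W := by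
    apply Algebra.adjoin_le
    rintro p ⟨i, rfl⟩ m hm h0
    rw [X_pow_eq_monomial, X, monomial_mul, support_monomial] at hm
    simp only [one_mul, if_neg one_ne_zero, Finset.mem_singleton] at hm
    subst hm
    simp at h0
  set N := T.sup totalDegree with hN
  set U : Subalgebra k (MvPolynomial (Fin 2) k) :=
    { carrier := {p | ∀ m ∈ p.support, (m 0 = 0 → m 1 = 0) ∧ (m 0 = 1 → m 1 ≤ N)}
      mul_mem' := by
        intro p q hp hq m hm
        obtain ⟨a, ha, b, hb, rfl⟩ := Finset.mem_add.mp (support_mul p q hm)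
        obtain ⟨ha0, ha1⟩ := hp a ha
        obtain ⟨hb0, hb1⟩ := hq b hb
        have e0 : (a + b) 0 = a 0 + b 0 := rfl
        have e1 : (a + b) 1 = a 1 + b 1 := rfl
        constructor
        · intro h0; rw [e0] at h0; rw [e1]
          have := ha0 (by omega); have := hb0 (by omega); omega
        · intro h1; rw [e0] at h1; rw [e1]
          rcases Nat.add_eq_one_iff.mp h1 with ⟨h, h'⟩ | ⟨h, h'⟩
          · have := ha0 h; have := hb1 h'; omega
          · have := ha1 h; have := hb0 h'; omega
      one_mem' := by
        intro m hm
        rw [mem_support_iff, coeff_one] at hm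
        rcases eq_or_ne m 0 with rfl | h
        · simp
        · rw [if_neg (fun e => h e.symm)] at hm; exact (hm rfl).elim
      add_mem' := by
        intro p q hp hq m hm
        rcases Finset.mem_union.mp (Finsupp.support_add hm) with h | h
        · exact hp m h
        · exact hq m h
      zero_mem' := by intro m hm; simp at hm
      algebraMap_mem' := by
        intro r m hm
        rw [mem_support_iff, algebraMap_eq, coeff_C] at hm
        rcases eq_or_ne m 0 with rfl | h
        · simp
        · simp [h.symm] at hm } with hUdef
  have hTU : Algebra.adjoin k (T : Set (MvPolynomial (Fin 2) k)) ≤ U := by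
    apply Algebra.adjoin_le
    intro t ht m hm
    have htW : t ∈ W := by
      apply hGW
      rw [← hT]
      exact Algebra.subset_adjoin ht
    refine ⟨htW m hm, fun _ => ?_⟩
    exact le_trans (le_trans (monomial_le_degreeOf 1 hm) (degreeOf_le_totalDegree t 1)) (Finset.le_sup ht)
  have hx : (X 0 * X 1 ^ (N + 1) : MvPolynomial (Fin 2) k) ∈ U := by
    apply hTU
    rw [hT]
    exact Algebra.subset_adjoin ⟨N + 1, rfl⟩
  have hsupp : ((X 0 * X 1 ^ (N + 1) : MvPolynomial (Fin 2) k)).support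
      = {Finsupp.single 0 1 + Finsupp.single 1 (N + 1)} := by
    rw [X_pow_eq_monomial, X, monomial_mul, support_monomial]
    simp
  have := (hx _ (by rw [hsupp]; exact Finset.mem_singleton_self _)).2 (by simp)
  simp at this
end

section
/- The partial derivative ∂/∂v on k[x,v] restricts to a locally nilpotent derivation D of the subring S = k[x, xv, xv², ...], and the sequence sₙ = xvⁿ/n! is an infinite D-cable with S = k[s₀, s₁, s₂, ...]; hence S is a simple cable algebra over k of transcendence degree 2. -/
open MvPolynomial

/-- The cable elements `sₙ = x vⁿ / n!` in `k[x,v]`. -/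
noncomputable def sCable (k : Type*) [Field k] [CharZero k] (n : ℕ) :
    MvPolynomial (Fin 2) k :=
  C ((n.factorial : k)⁻¹) * X 0 * X 1 ^ n

section Helpers

variable {σ : Type*} {k : Type*} [CommRing k]

private lemma SCA.totalDegree_pderiv_le (i : σ) (p : MvPolynomial σ k) {n : ℕ}
    (h : p.totalDegree ≤ n + 1) : (pderiv i p).totalDegree ≤ n := by
  classical
  conv_lhs => rw [p.as_sum]
  rw [map_sum]
  refine (totalDegree_finset_sum _ _).trans (Finset.sup_le fun s hs => ?_)
  rw [pderiv_monomial]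
  rcases Nat.eq_zero_or_pos (s i) with h0 | h0
  · simp [h0]
  · refine (totalDegree_monomial_le _ _).trans ?_
    have hs' : (s.sum fun _ e => e) ≤ n + 1 :=
      le_trans (MvPolynomial.le_totalDegree hs) h
    have key : ((s - Finsupp.single i 1).sum fun _ e => e) + 1 = s.sum fun _ e => e := by
      have hrec : (s - Finsupp.single i 1) + Finsupp.single i 1 = s := by
        ext j
        by_cases hj : j = i
        · subst hj; simp [Nat.sub_add_cancel h0]
        · simp [Finsupp.single_apply, Ne.symm hj, hj]
      conv_rhs => rw [← hrec]
      rw [Finsupp.sum_add_index' (fun _ => rfl) (fun _ _ _ => rfl)]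
      simp
    simp only [Function.id_def]
    omega

private lemma SCA.pderiv_of_totalDegree_zero (i : σ) (p : MvPolynomial σ k)
    (h : p.totalDegree = 0) : pderiv i p = 0 := by
  classical
  rw [p.as_sum, map_sum]
  refine Finset.sum_eq_zero fun s hs => ?_
  have := ((totalDegree_eq_zero_iff σ p).1 h) s hs i
  rw [pderiv_monomial, this]
  simp

private lemma SCA.pderiv_iterate_eq_zero (i : σ) :
    ∀ (n : ℕ) (p : MvPolynomial σ k), p.totalDegree ≤ n →
      (fun q => pderiv i q)^[n + 1] p = 0
  | 0, p, h => by
    simpa using SCA.pderiv_of_totalDegree_zero i p (Nat.le_zero.1 h)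
  | n + 1, p, h => by
    rw [Function.iterate_succ_apply]
    exact SCA.pderiv_iterate_eq_zero i n _ (SCA.totalDegree_pderiv_le i p h)

/-- The exponent substitution `(a, b) ↦ (a + b, b)` on monomials. -/
private noncomputable def SCA.Emap : (Fin 2 →₀ ℕ) → (Fin 2 →₀ ℕ) :=
  fun d => Finsupp.equivFunOnFinite.symm ![d 0 + d 1, d 1]

private lemma SCA.Emap_apply0 (d : Fin 2 →₀ ℕ) : SCA.Emap d 0 = d 0 + d 1 := rfl
private lemma SCA.Emap_apply1 (d : Fin 2 →₀ ℕ) : SCA.Emap d 1 = d 1 := rfl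

private lemma SCA.Emap_injective : Function.Injective SCA.Emap := by
  intro d d' h
  have h0 : SCA.Emap d 0 = SCA.Emap d' 0 := by rw [h]
  have h1 : SCA.Emap d 1 = SCA.Emap d' 1 := by rw [h]
  rw [SCA.Emap_apply0, SCA.Emap_apply0] at h0
  rw [SCA.Emap_apply1, SCA.Emap_apply1] at h1
  ext j
  have hj : j = 0 ∨ j = 1 := by omega
  rcases hj with rfl | rfl <;> omega

private lemma SCA.aeval_xxv_monomial (s : Fin 2 →₀ ℕ) (c : k) :
    aeval ![(X 0 : MvPolynomial (Fin 2) k), X 0 * X 1] (monomial s c) =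
      monomial (SCA.Emap s) c := by
  rw [aeval_monomial, Finsupp.prod_fintype _ _ (fun _ => pow_zero _),
    (monomial_eq : monomial (SCA.Emap s) c = _),
    Finsupp.prod_fintype _ _ (fun _ => pow_zero _)]
  rw [Fin.prod_univ_two, Fin.prod_univ_two, SCA.Emap_apply0, SCA.Emap_apply1]
  simp only [Matrix.cons_val_zero, Matrix.cons_val_one, Matrix.head_cons, algebraMap_eq]
  ring

private lemma SCA.coeff_aeval_xxv (p : MvPolynomial (Fin 2) k) (d : Fin 2 →₀ ℕ) :
    coeff (SCA.Emap d) (aeval ![(X 0 : MvPolynomial (Fin 2) k), X 0 * X 1] p) = coeff d p := by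
  classical
  conv_lhs => rw [p.as_sum, map_sum]
  rw [coeff_sum]
  simp only [SCA.aeval_xxv_monomial, coeff_monomial]
  rw [Finset.sum_eq_single d]
  · simp
  · intro b _ hb
    rw [if_neg (fun he => hb (SCA.Emap_injective he))]
  · intro hd
    simp [MvPolynomial.notMem_support_iff.1 hd]

private lemma SCA.aeval_xxv_injective :
    Function.Injective (aeval ![(X 0 : MvPolynomial (Fin 2) k), X 0 * X 1] :
      MvPolynomial (Fin 2) k →ₐ[k] MvPolynomial (Fin 2) k) := by
  intro p q h
  ext d
  rw [← SCA.coeff_aeval_xxv p d, ← SCA.coeff_aeval_xxv q d, h]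

private lemma SCA.aset_finite (ν N : ℕ) :
    {n : Fin ν →₀ ℕ | (n.sum fun _ e => e) ≤ N}.Finite := by
  have h1 : Set.Finite (Set.pi Set.univ fun _ : Fin ν => Set.Iic N) :=
    Set.Finite.pi fun _ => Set.finite_Iic N
  have h2 : Set.Finite (Finsupp.equivFunOnFinite ⁻¹'
      (Set.pi Set.univ fun _ : Fin ν => Set.Iic N)) :=
    Set.Finite.preimage Finsupp.equivFunOnFinite.injective.injOn h1
  refine h2.subset fun n hn => ?_
  intro i _
  simp only [Set.mem_Iic]
  calc n i ≤ n.sum fun _ e => e := by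
        rw [Finsupp.sum_fintype _ _ fun _ => rfl]
        exact Finset.single_le_sum (fun _ _ => Nat.zero_le _) (Finset.mem_univ i)
    _ ≤ N := hn

private lemma SCA.coord_le_finsupp_sum {ν : ℕ} (n : Fin ν →₀ ℕ) (i : Fin ν) :
    n i ≤ n.sum fun _ e => e := by
  rw [Finsupp.sum_fintype _ _ fun _ => rfl]
  exact Finset.single_le_sum (fun _ _ => Nat.zero_le _) (Finset.mem_univ i)

private lemma SCA.totalDegree_aeval_le {m l : ℕ} (u : Fin m → MvPolynomial (Fin l) k)
    (p : MvPolynomial (Fin m) k) {d : ℕ} (hd : ∀ i, (u i).totalDegree ≤ d) :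
    (aeval u p).totalDegree ≤ d * p.totalDegree := by
  classical
  conv_lhs => rw [p.as_sum, map_sum]
  refine (totalDegree_finset_sum _ _).trans (Finset.sup_le fun s hs => ?_)
  rw [aeval_monomial]
  refine (totalDegree_mul _ _).trans ?_
  rw [algebraMap_eq, totalDegree_C, zero_add, Finsupp.prod]
  refine (totalDegree_finset_prod _ _).trans ?_
  calc ∑ i ∈ s.support, ((u i) ^ s i).totalDegree
      ≤ ∑ i ∈ s.support, s i * d := by
        refine Finset.sum_le_sum fun i _ => ?_
        exact (totalDegree_pow _ _).trans (Nat.mul_le_mul_left _ (hd i))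
    _ = (s.sum fun _ e => e) * d := by rw [Finsupp.sum, Finset.sum_mul]
    _ ≤ p.totalDegree * d := Nat.mul_le_mul_right _ (MvPolynomial.le_totalDegree hs)
    _ = d * p.totalDegree := Nat.mul_comm _ _

end Helpers

section Field

variable {k : Type*} [Field k]

private lemma SCA.finrank_restrictTotalDegree (k : Type*) [Field k] (ν N : ℕ) :
    Module.finrank k (restrictTotalDegree (Fin ν) k N) =
      Nat.card {n : Fin ν →₀ ℕ | (n.sum fun _ e => e) ≤ N} := by
  haveI : Fintype {n : Fin ν →₀ ℕ | (n.sum fun _ e => e) ≤ N} := (SCA.aset_finite ν N).fintype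
  rw [show restrictTotalDegree (Fin ν) k N =
      restrictSupport k {n : Fin ν →₀ ℕ | (n.sum fun _ e => e) ≤ N} from rfl,
    Module.finrank_eq_card_basis
      (basisRestrictSupport k {n : Fin ν →₀ ℕ | (n.sum fun _ e => e) ≤ N}),
    Nat.card_eq_fintype_card]

private lemma SCA.card_aset2_le (D : ℕ) :
    Nat.card {n : Fin 2 →₀ ℕ | (n.sum fun _ e => e) ≤ D} ≤ (D + 1) ^ 2 := by
  haveI : Fintype {n : Fin 2 →₀ ℕ | (n.sum fun _ e => e) ≤ D} := (SCA.aset_finite 2 D).fintype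
  have h : Nat.card {n : Fin 2 →₀ ℕ | (n.sum fun _ e => e) ≤ D} ≤
      Nat.card (Fin (D + 1) × Fin (D + 1)) := by
    refine Nat.card_le_card_of_injective
      (fun n => (⟨n.1 0, Nat.lt_succ_of_le ((SCA.coord_le_finsupp_sum n.1 0).trans n.2)⟩,
                 ⟨n.1 1, Nat.lt_succ_of_le ((SCA.coord_le_finsupp_sum n.1 1).trans n.2)⟩)) ?_
    intro n m h
    simp only [Prod.mk.injEq, Fin.mk.injEq] at h
    ext j
    have hj : j = 0 ∨ j = 1 := by omega
    rcases hj with rfl | rfl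
    · exact h.1
    · exact h.2
  rw [pow_two]
  simpa [Nat.card_eq_fintype_card] using h

private lemma SCA.card_aset3_ge (M : ℕ) :
    (M + 1) ^ 3 ≤ Nat.card {n : Fin 3 →₀ ℕ | (n.sum fun _ e => e) ≤ 3 * M} := by
  haveI : Fintype {n : Fin 3 →₀ ℕ | (n.sum fun _ e => e) ≤ 3 * M} :=
    (SCA.aset_finite 3 (3 * M)).fintype
  have key : Nat.card (Fin (M + 1) × Fin (M + 1) × Fin (M + 1)) ≤
      Nat.card {n : Fin 3 →₀ ℕ | (n.sum fun _ e => e) ≤ 3 * M} := by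
    refine Nat.card_le_card_of_injective (fun t =>
      ⟨Finsupp.equivFunOnFinite.symm ![t.1.1, t.2.1.1, t.2.2.1], ?_⟩) ?_
    · rw [Set.mem_setOf_eq, Finsupp.sum_fintype _ _ fun _ => rfl]
      have h : ∀ j : Fin 3,
          (Finsupp.equivFunOnFinite.symm ![t.1.1, t.2.1.1, t.2.2.1] : Fin 3 →₀ ℕ) j =
            ![t.1.1, t.2.1.1, t.2.2.1] j := fun _ => rfl
      rw [Fin.sum_univ_three, h 0, h 1, h 2]
      have h0 : (![t.1.1, t.2.1.1, t.2.2.1] : Fin 3 → ℕ) 0 = t.1.1 := rfl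
      have h1 : (![t.1.1, t.2.1.1, t.2.2.1] : Fin 3 → ℕ) 1 = t.2.1.1 := rfl
      have h2 : (![t.1.1, t.2.1.1, t.2.2.1] : Fin 3 → ℕ) 2 = t.2.2.1 := rfl
      rw [h0, h1, h2]
      have := t.1.2; have := t.2.1.2; have := t.2.2.2
      omega
    · intro a b h
      simp only [Subtype.mk.injEq] at h
      have h' := Finsupp.equivFunOnFinite.symm.injective h
      have e0 : (![a.1.1, a.2.1.1, a.2.2.1] : Fin 3 → ℕ) 0 =
          (![b.1.1, b.2.1.1, b.2.2.1] : Fin 3 → ℕ) 0 := by rw [h']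
      have e1 : (![a.1.1, a.2.1.1, a.2.2.1] : Fin 3 → ℕ) 1 =
          (![b.1.1, b.2.1.1, b.2.2.1] : Fin 3 → ℕ) 1 := by rw [h']
      have e2 : (![a.1.1, a.2.1.1, a.2.2.1] : Fin 3 → ℕ) 2 =
          (![b.1.1, b.2.1.1, b.2.2.1] : Fin 3 → ℕ) 2 := by rw [h']
      simp only [Matrix.cons_val_zero, Matrix.cons_val_one, Matrix.head_cons,
        Matrix.cons_val_two, Matrix.tail_cons] at e0 e1 e2
      exact Prod.ext (Fin.ext e0) (Prod.ext (Fin.ext e1) (Fin.ext e2))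
  rw [show (M + 1) ^ 3 = (M + 1) * ((M + 1) * (M + 1)) by ring]
  simpa [Nat.card_eq_fintype_card] using key

private lemma SCA.not_algebraicIndependent_three (u : Fin 3 → MvPolynomial (Fin 2) k) :
    ¬ AlgebraicIndependent k u := by
  intro hu
  have hinj : Function.Injective
      (aeval u : MvPolynomial (Fin 3) k →ₐ[k] MvPolynomial (Fin 2) k) :=
    algebraicIndependent_iff_injective_aeval.1 hu
  set d : ℕ := (Finset.univ.sup fun i => (u i).totalDegree) + 1 with hd_def
  have hd : ∀ i, (u i).totalDegree ≤ d := fun i => by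
    rw [hd_def]
    exact Nat.le_succ_of_le (Finset.le_sup (f := fun i => (u i).totalDegree) (Finset.mem_univ i))
  set M : ℕ := 16 * d ^ 2 + 1 with hM_def
  set N : ℕ := 3 * M with hN_def
  set D : ℕ := d * N with hD_def
  have hmap : ∀ p ∈ restrictTotalDegree (Fin 3) k N,
      (aeval u : MvPolynomial (Fin 3) k →ₐ[k] _) p ∈ restrictTotalDegree (Fin 2) k D := by
    intro p hp
    rw [mem_restrictTotalDegree] at hp ⊢
    exact (SCA.totalDegree_aeval_le u p hd).trans (Nat.mul_le_mul_left d hp)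
  haveI : Fintype {n : Fin 2 →₀ ℕ | (n.sum fun _ e => e) ≤ D} := (SCA.aset_finite 2 D).fintype
  haveI : Module.Finite k (restrictTotalDegree (Fin 2) k D) :=
    Module.Finite.of_basis (basisRestrictSupport k {n : Fin 2 →₀ ℕ | (n.sum fun _ e => e) ≤ D})
  let L : restrictTotalDegree (Fin 3) k N →ₗ[k] restrictTotalDegree (Fin 2) k D :=
    LinearMap.codRestrict _
      ((aeval u : MvPolynomial (Fin 3) k →ₐ[k] _).toLinearMap.comp
        (restrictTotalDegree (Fin 3) k N).subtype)
      (fun x => hmap x.1 x.2)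
  have hLinj : Function.Injective L := by
    intro a b h
    have h' : (aeval u : MvPolynomial (Fin 3) k →ₐ[k] _) a.1 =
        (aeval u : MvPolynomial (Fin 3) k →ₐ[k] _) b.1 := congrArg Subtype.val h
    exact Subtype.ext (hinj h')
  have hfr := LinearMap.finrank_le_finrank_of_injective hLinj
  rw [SCA.finrank_restrictTotalDegree k 3 N, SCA.finrank_restrictTotalDegree k 2 D] at hfr
  have h3 := SCA.card_aset3_ge M
  have h2 := SCA.card_aset2_le D
  rw [← hN_def] at h3
  have hfinal : (M + 1) ^ 3 ≤ (D + 1) ^ 2 := le_trans h3 (le_trans hfr h2)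
  have hd1 : 1 ≤ d := Nat.le_add_left _ _
  have hDeq : D = 3 * d * M := by rw [hD_def, hN_def]; ring
  rw [hDeq] at hfinal
  nlinarith [sq_nonneg d, sq_nonneg M, hd1, hM_def]

end Field

/-- `∂/∂v` restricts to a locally nilpotent derivation `D` of
`S = k[x, xv, xv², ...]`, the sequence `sₙ = x vⁿ / n!` is an infinite `D`-cable generating
`S`, and `S` has transcendence degree 2 over `k`; hence `S` is a simple cable algebra. -/
theorem S_simple_cable_algebra (k : Type*) [Field k] [CharZero k] :
    letI S := Algebra.adjoin k {p : MvPolynomial (Fin 2) k | ∃ i : ℕ, p = X 0 * X 1 ^ i}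
    -- ∂/∂v restricts to S
    (∀ p ∈ S, pderiv (1 : Fin 2) p ∈ S) ∧
    -- the restriction is locally nilpotent
    (∀ p ∈ S, ∃ n : ℕ, (fun q => pderiv (1 : Fin 2) q)^[n] p = 0) ∧
    -- (sₙ) is a D-cable rooted at s₀ = x ≠ 0 ...
    sCable k 0 ≠ 0 ∧ pderiv (1 : Fin 2) (sCable k 0) = 0 ∧
    (∀ n : ℕ, sCable k n ∈ S) ∧
    (∀ n : ℕ, pderiv (1 : Fin 2) (sCable k (n + 1)) = sCable k n) ∧
    -- ... which is infinite: every vertex is in D(S)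
    (∀ n : ℕ, ∃ q ∈ S, pderiv (1 : Fin 2) q = sCable k n) ∧
    -- S is generated by the vertices of the cable
    S = Algebra.adjoin k (Set.range (sCable k)) ∧
    -- S has transcendence degree 2 over k
    (∃ t : Fin 2 → S, AlgebraicIndependent k t) ∧
    (∀ t : Fin 3 → S, ¬ AlgebraicIndependent k t) := by
  set S := Algebra.adjoin k {p : MvPolynomial (Fin 2) k | ∃ i : ℕ, p = X 0 * X 1 ^ i} with hS
  have h01 : (0 : Fin 2) ≠ 1 := by decide
  -- a key derivative computation
  have hder : ∀ i : ℕ, pderiv (1 : Fin 2) ((X 0 : MvPolynomial (Fin 2) k) * X 1 ^ i) =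
      (i : MvPolynomial (Fin 2) k) * (X 0 * X 1 ^ (i - 1)) := by
    intro i
    rw [pderiv_mul, pderiv_pow, pderiv_X_self, pderiv_X_of_ne h01]
    ring
  -- part 1 : D restricts to S
  have part1 : ∀ p ∈ S, pderiv (1 : Fin 2) p ∈ S := by
    intro p hp
    induction hp using Algebra.adjoin_induction with
    | mem x hx =>
      obtain ⟨i, rfl⟩ := hx
      rw [hder i]
      cases i with
      | zero => simp only [Nat.cast_zero, zero_mul]; exact Subalgebra.zero_mem S
      | succ m =>
        exact mul_mem (Subalgebra.natCast_mem S (m + 1))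
          (Algebra.subset_adjoin ⟨m + 1 - 1, rfl⟩)
    | algebraMap r => rw [algebraMap_eq, pderiv_C]; exact Subalgebra.zero_mem S
    | add x y hx hy ihx ihy => rw [map_add]; exact add_mem ihx ihy
    | mul x y hx hy ihx ihy =>
      rw [pderiv_mul]
      exact add_mem (mul_mem ihx hy) (mul_mem hx ihy)
  -- part 5 : the cable lies in S
  have part5 : ∀ n : ℕ, sCable k n ∈ S := by
    intro n
    have h : sCable k n = ((n.factorial : k)⁻¹) • ((X 0 : MvPolynomial (Fin 2) k) * X 1 ^ n) := by
      rw [MvPolynomial.smul_eq_C_mul, sCable, mul_assoc]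
    rw [h]
    exact Subalgebra.smul_mem S (Algebra.subset_adjoin ⟨n, rfl⟩) _
  -- part 6 : the cable equation
  have part6 : ∀ n : ℕ, pderiv (1 : Fin 2) (sCable k (n + 1)) = sCable k n := by
    intro n
    have hfac : ((n + 1).factorial : k)⁻¹ * ((n + 1 : ℕ) : k) = (n.factorial : k)⁻¹ := by
      rw [Nat.factorial_succ]
      have h1 : ((n + 1 : ℕ) : k) ≠ 0 := Nat.cast_ne_zero.2 (Nat.succ_ne_zero n)
      have h2 : ((n.factorial : ℕ) : k) ≠ 0 := Nat.cast_ne_zero.2 n.factorial_ne_zero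
      push_cast
      field_simp
    rw [sCable, mul_assoc, pderiv_C_mul, hder (n + 1)]
    have hcast : ((n + 1 : ℕ) : MvPolynomial (Fin 2) k) = C ((n + 1 : ℕ) : k) := by
      simp
    rw [Nat.add_sub_cancel, hcast, ← mul_assoc, ← C_mul, hfac, sCable, mul_assoc]
  constructor
  · exact part1
  constructor
  · -- local nilpotency
    intro p _
    exact ⟨p.totalDegree + 1, SCA.pderiv_iterate_eq_zero 1 p.totalDegree p le_rfl⟩
  constructor
  · -- s₀ ≠ 0
    have h : sCable k 0 = X 0 := by simp [sCable]
    rw [h]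
    exact X_ne_zero 0
  constructor
  · -- D s₀ = 0
    have h : sCable k 0 = X 0 := by simp [sCable]
    rw [h, pderiv_X_of_ne h01]
  constructor
  · exact part5
  constructor
  · exact part6
  constructor
  · -- the cable is infinite
    exact fun n => ⟨sCable k (n + 1), part5 (n + 1), part6 n⟩
  constructor
  · -- S is generated by the cable
    refine le_antisymm (Algebra.adjoin_le ?_) (Algebra.adjoin_le ?_)
    · rintro p ⟨i, rfl⟩
      have h : (X 0 : MvPolynomial (Fin 2) k) * X 1 ^ i = (i.factorial : k) • sCable k i := by
        rw [MvPolynomial.smul_eq_C_mul, sCable, ← mul_assoc, ← mul_assoc, ← C_mul,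
          mul_inv_cancel₀ (Nat.cast_ne_zero.2 i.factorial_ne_zero : (i.factorial : k) ≠ 0), C_1,
          one_mul]
      rw [h]
      exact Subalgebra.smul_mem _ (Algebra.subset_adjoin (Set.mem_range_self i)) _
    · rintro p ⟨n, rfl⟩
      exact part5 n
  constructor
  · -- two algebraically independent elements
    have hx0 : (X 0 : MvPolynomial (Fin 2) k) ∈ S := by
      apply Algebra.subset_adjoin; exact ⟨0, by simp⟩
    have hx01 : (X 0 : MvPolynomial (Fin 2) k) * X 1 ∈ S := by
      apply Algebra.subset_adjoin; exact ⟨1, by simp⟩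
    have hmem : ∀ i : Fin 2, ![(X 0 : MvPolynomial (Fin 2) k), X 0 * X 1] i ∈ S := by
      intro i; fin_cases i
      · simpa using hx0
      · simpa using hx01
    refine ⟨fun i => ⟨![X 0, X 0 * X 1] i, hmem i⟩, ?_⟩
    rw [← AlgHom.algebraicIndependent_iff S.val Subtype.val_injective]
    have heq : (S.val ∘ fun i => (⟨![X 0, X 0 * X 1] i, hmem i⟩ : S)) = ![X 0, X 0 * X 1] := by
      funext i; rfl
    rw [heq]
    exact algebraicIndependent_iff_injective_aeval.2 SCA.aeval_xxv_injective
  · -- no three algebraically independent elements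
    intro t ht
    have ht' : AlgebraicIndependent k (S.val ∘ t) :=
      (AlgHom.algebraicIndependent_iff S.val Subtype.val_injective).2 ht
    exact SCA.not_algebraicIndependent_three (S.val ∘ t) ht'
end

section
/- Let B = k[a,x,y,z,v] be a polynomial ring in five variables and D the derivation with Dz = y, Dy = x, Dx = a³, Dv = a², Da = 0. Then D is locally nilpotent, and the elements F = 2a³y − x², G = 3a⁶z − 3a³xy + x³, and h = 9a⁶z² − 18a³xyz + 8a³y³ + 6x³z − 3x²y² all lie in ker D, with a⁶h = F³ + G². -/
open MvPolynomial

section Aux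

open Function

variable {k : Type*} [Field k] [CharZero k]

private lemma iterDZero (D : Derivation k (MvPolynomial (Fin 5) k) (MvPolynomial (Fin 5) k))
    (n : ℕ) : (⇑D)^[n] (0 : MvPolynomial (Fin 5) k) = 0 := by
  induction n with
  | zero => simp
  | succ n ih => rw [iterate_succ_apply, map_zero]; exact ih

private lemma iterDAdd (D : Derivation k (MvPolynomial (Fin 5) k) (MvPolynomial (Fin 5) k))
    (a b : MvPolynomial (Fin 5) k) (n : ℕ) :
    (⇑D)^[n] (a + b) = (⇑D)^[n] a + (⇑D)^[n] b := by
  induction n generalizing a b with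
  | zero => simp
  | succ n ihn => rw [iterate_succ_apply, map_add, ihn, iterate_succ_apply, iterate_succ_apply]

private lemma iterDMul (D : Derivation k (MvPolynomial (Fin 5) k) (MvPolynomial (Fin 5) k)) :
    ∀ (s m l : ℕ) (p q : MvPolynomial (Fin 5) k), m + l = s →
      (⇑D)^[m] p = 0 → (⇑D)^[l] q = 0 → (⇑D)^[m + l] (p * q) = 0 := by
  intro s
  induction s with
  | zero =>
    intro m l p q hs hp hq
    obtain ⟨rfl, rfl⟩ : m = 0 ∧ l = 0 := by omega
    simp only [iterate_zero, id_eq] at hp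
    rw [hp, zero_mul]; exact iterDZero D _
  | succ s ih =>
    intro m l p q hs hp hq
    match m, l with
    | 0, l =>
      simp only [iterate_zero, id_eq] at hp
      subst hp
      rw [zero_mul]; exact iterDZero D _
    | m + 1, 0 =>
      simp only [iterate_zero, id_eq] at hq
      subst hq
      rw [mul_zero]; exact iterDZero D _
    | m + 1, l + 1 =>
      have key : (m + 1) + (l + 1) = ((m + 1) + l) + 1 := by omega
      rw [key, iterate_succ_apply, D.leibniz, iterDAdd]
      have h1 : (⇑D)^[(m + 1) + l] (p * D q) = 0 :=
        ih (m + 1) l p (D q) (by omega) hp (by rw [← iterate_succ_apply]; exact hq)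
      have h2 : (⇑D)^[m + (l + 1)] (D p * q) = 0 :=
        ih m (l + 1) (D p) q (by omega) (by rw [← iterate_succ_apply]; exact hp) hq
      rw [smul_eq_mul, smul_eq_mul, h1, mul_comm q (D p), zero_add,
        show (m + 1) + l = m + (l + 1) by omega, h2]

end Aux

/-- The derivation `D` of `B = k[a,x,y,z,v]` (variables `a = X 0`, `x = X 1`, `y = X 2`,
`z = X 3`, `v = X 4`) with `Dz = y`, `Dy = x`, `Dx = a³`, `Dv = a²`, `Da = 0`. -/
noncomputable def dimFiveDer (k : Type*) [Field k] [CharZero k] :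
    Derivation k (MvPolynomial (Fin 5) k) (MvPolynomial (Fin 5) k) :=
  MvPolynomial.mkDerivation k ![0, X 0 ^ 3, X 1, X 2, X 0 ^ 2]

/-- `F = 2a³y − x²`. -/
noncomputable def Fpoly (k : Type*) [Field k] [CharZero k] : MvPolynomial (Fin 5) k :=
  2 * X 0 ^ 3 * X 2 - X 1 ^ 2

/-- `G = 3a⁶z − 3a³xy + x³`. -/
noncomputable def Gpoly (k : Type*) [Field k] [CharZero k] : MvPolynomial (Fin 5) k :=
  3 * X 0 ^ 6 * X 3 - 3 * X 0 ^ 3 * X 1 * X 2 + X 1 ^ 3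

/-- `h = 9a⁶z² − 18a³xyz + 8a³y³ + 6x³z − 3x²y²`. -/
noncomputable def hpoly (k : Type*) [Field k] [CharZero k] : MvPolynomial (Fin 5) k :=
  9 * X 0 ^ 6 * X 3 ^ 2 - 18 * X 0 ^ 3 * X 1 * X 2 * X 3 + 8 * X 0 ^ 3 * X 2 ^ 3 +
    6 * X 1 ^ 3 * X 3 - 3 * X 1 ^ 2 * X 2 ^ 2

/-- `D` is locally nilpotent, `F`, `G`, `h` lie in `ker D`, and `a⁶ h = F³ + G²`. -/
theorem dimFiveDer_properties (k : Type*) [Field k] [CharZero k] :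
    (∀ b : MvPolynomial (Fin 5) k, ∃ n : ℕ, (⇑(dimFiveDer k))^[n] b = 0) ∧
    dimFiveDer k (Fpoly k) = 0 ∧ dimFiveDer k (Gpoly k) = 0 ∧ dimFiveDer k (hpoly k) = 0 ∧
    X 0 ^ 6 * hpoly k = Fpoly k ^ 3 + Gpoly k ^ 2 := by
  set D := dimFiveDer k with hDdef
  have h0 : D (X 0) = 0 := by simp [hDdef, dimFiveDer, mkDerivation_X]
  have h1 : D (X 1) = X 0 ^ 3 := by simp [hDdef, dimFiveDer, mkDerivation_X]
  have h2 : D (X 2) = X 1 := by simp [hDdef, dimFiveDer, mkDerivation_X]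
  have h3 : D (X 3) = X 2 := by simp [hDdef, dimFiveDer, mkDerivation_X]
  have h4 : D (X 4) = X 0 ^ 2 := by simp [hDdef, dimFiveDer, mkDerivation_X]
  have c2 : D (2 : MvPolynomial (Fin 5) k) = 0 := by simpa using D.map_natCast 2
  have c3 : D (3 : MvPolynomial (Fin 5) k) = 0 := by simpa using D.map_natCast 3
  have c6 : D (6 : MvPolynomial (Fin 5) k) = 0 := by simpa using D.map_natCast 6
  have c8 : D (8 : MvPolynomial (Fin 5) k) = 0 := by simpa using D.map_natCast 8
  have c9 : D (9 : MvPolynomial (Fin 5) k) = 0 := by simpa using D.map_natCast 9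
  have c18 : D (18 : MvPolynomial (Fin 5) k) = 0 := by simpa using D.map_natCast 18
  refine ⟨?_, ?_, ?_, ?_, ?_⟩
  · -- local nilpotency
    have hXpow : ∀ i : Fin 5, ∃ n : ℕ, (⇑D)^[n] (X i : MvPolynomial (Fin 5) k) = 0 := by
      intro i
      fin_cases i
      · exact ⟨1, by simpa using h0⟩
      · refine ⟨2, ?_⟩
        show D (D (X 1)) = 0
        rw [h1, Derivation.leibniz_pow, h0]
        simp
      · refine ⟨3, ?_⟩
        show D (D (D (X 2))) = 0
        rw [h2, h1, Derivation.leibniz_pow, h0]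
        simp
      · refine ⟨4, ?_⟩
        show D (D (D (D (X 3)))) = 0
        rw [h3, h2, h1, Derivation.leibniz_pow, h0]
        simp
      · refine ⟨2, ?_⟩
        show D (D (X 4)) = 0
        rw [h4, Derivation.leibniz_pow, h0]
        simp
    intro b
    induction b using MvPolynomial.induction_on with
    | C a => exact ⟨1, by simp⟩
    | add p q hp hq =>
      obtain ⟨m, hm⟩ := hp
      obtain ⟨l, hl⟩ := hq
      refine ⟨m + l, ?_⟩
      have e1 : (⇑D)^[m + l] p = 0 := by
        rw [add_comm, Function.iterate_add_apply, hm, iterDZero]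
      have e2 : (⇑D)^[m + l] q = 0 := by
        rw [Function.iterate_add_apply, hl, iterDZero]
      rw [iterDAdd, e1, e2, add_zero]
    | mul_X p i hp =>
      obtain ⟨m, hm⟩ := hp
      obtain ⟨l, hl⟩ := hXpow i
      exact ⟨m + l, iterDMul D (m + l) m l p (X i) rfl hm hl⟩
  · simp [Fpoly, Derivation.leibniz, Derivation.leibniz_pow, h0, h1, h2, c2, smul_eq_mul]
    ring
  · simp [Gpoly, Derivation.leibniz, Derivation.leibniz_pow, h0, h1, h2, h3, c3, smul_eq_mul]
    ring
  · simp [hpoly, Derivation.leibniz, Derivation.leibniz_pow, h0, h1, h2, h3, c3, c6, c8, c9,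
      c18, smul_eq_mul]
    ring
  · simp only [Fpoly, Gpoly, hpoly]
    ring
end
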